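/- Let W be a DMC with W(y|x) > 0 for all x, y, and such that the conditional output entropy H(W(·|x)) = −Σ_y W(y|x) log W(y|x) takes the same value for every x ∈ 𝒳. Fix 0 ≤ ε < 1. Then there exist a constant a = a(ε, W) > 0 and a threshold N = N(ε, W) such that for every n ≥ N and every (n, M_n, ε)_{max,det} code, the induced output distribution P_{Y^n} satisfies Var_{Y^n ∼ P_{Y^n}}[ log P_{Y^n}(Y^n) ] ≤ a·n. -/

import Mathlib

set_option maxHeartbeats 1600000


open Filter
open Finset

/-- Discrete relative entropy between two probability mass functions on a finite
alphabet (with the usual conventions `0 log 0 = 0`, and dropping terms where the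
second argument vanishes — these never occur under absolute continuity). -/
noncomputable def dKL {α : Type*} [Fintype α] (p q : α → ℝ) : ℝ :=
  ∑ a, p a * Real.log (p a / q a)

/-- `p` is a probability mass function on a finite alphabet. -/
def IsPMF {α : Type*} [Fintype α] (p : α → ℝ) : Prop :=
  (∀ a, 0 ≤ p a) ∧ ∑ a, p a = 1

/-- A discrete memoryless channel: a stochastic matrix. -/
def IsDMC {𝒳 𝒴 : Type*} [Fintype 𝒳] [Fintype 𝒴] (W : 𝒳 → 𝒴 → ℝ) : Prop :=
  ∀ x, IsPMF (W x)

/-- Output distribution `pW` induced by input distribution `p`. -/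
noncomputable def outDist {𝒳 𝒴 : Type*} [Fintype 𝒳] [Fintype 𝒴]
    (p : 𝒳 → ℝ) (W : 𝒳 → 𝒴 → ℝ) : 𝒴 → ℝ :=
  fun y => ∑ x, p x * W x y

/-- Capacity of a DMC: `C = max_p ∑_x p(x) D(W(·|x) ‖ pW)`. -/
noncomputable def capacity {𝒳 𝒴 : Type*} [Fintype 𝒳] [Fintype 𝒴]
    (W : 𝒳 → 𝒴 → ℝ) : ℝ :=
  sSup { r | ∃ p : 𝒳 → ℝ, IsPMF p ∧ r = ∑ x, p x * dKL (W x) (outDist p W) }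

/-- The blocklength-`n` memoryless extension of `W`: `P_{Y^n|X^n=x}(y) = ∏ᵢ W(yᵢ|xᵢ)`. -/
noncomputable def prodW {𝒳 𝒴 : Type*} [Fintype 𝒳] [Fintype 𝒴]
    (W : 𝒳 → 𝒴 → ℝ) (n : ℕ) : (Fin n → 𝒳) → (Fin n → 𝒴) → ℝ :=
  fun x y => ∏ i, W (x i) (y i)

/-- Output pmf `P_{Y^n}` induced by the codebook `c` (uniform messages). -/
noncomputable def codeOut {𝒳 𝒴 : Type*} [Fintype 𝒳] [Fintype 𝒴]
    (W : 𝒳 → 𝒴 → ℝ) {n M : ℕ} (c : Fin M → Fin n → 𝒳) : (Fin n → 𝒴) → ℝ :=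
  fun y => (M : ℝ)⁻¹ * ∑ j, prodW W n (c j) y

/-- Variance of `log P_{Y^n}(Y^n)` when `Y^n ∼ P_{Y^n}`. -/
noncomputable def outLogVar {𝒳 𝒴 : Type*} [Fintype 𝒳] [Fintype 𝒴]
    (W : 𝒳 → 𝒴 → ℝ) {n M : ℕ} (c : Fin M → Fin n → 𝒳) : ℝ :=
  (∑ y, codeOut W c y * Real.log (codeOut W c y) ^ 2)
    - (∑ y, codeOut W c y * Real.log (codeOut W c y)) ^ 2

section Aux2
variable {𝒴 : Type*} [Fintype 𝒴]


lemma sum_prod_eq' : ∀ (n : ℕ) (F : Fin n → 𝒴 → ℝ),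
    ∑ y : Fin n → 𝒴, ∏ i, F i (y i) = ∏ i, ∑ b, F i b := by
  intro n; induction n with
  | zero => intro F; simp
  | succ n ih =>
    intro F
    have hsplit : ∀ G : (Fin (n+1) → 𝒴) → ℝ,
        ∑ y : Fin (n+1) → 𝒴, G y = ∑ b : 𝒴, ∑ z : Fin n → 𝒴, G (Fin.cons b z) := by
      intro G
      rw [← Equiv.sum_comp (Fin.consEquiv (fun _ : Fin (n+1) => 𝒴)) G, Fintype.sum_prod_type]
      rfl
    rw [show (∑ y : Fin (n+1) → 𝒴, ∏ i, F i (y i))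
        = ∑ b : 𝒴, ∑ z : Fin n → 𝒴, ∏ i, F i ((Fin.cons b z : Fin (n+1) → 𝒴) i) from
      hsplit (fun y => ∏ i, F i (y i))]
    have hcons : ∀ (b : 𝒴) (z : Fin n → 𝒴),
        (∏ i, F i ((Fin.cons b z : Fin (n+1) → 𝒴) i)) = F 0 b * ∏ i : Fin n, F i.succ (z i) := by
      intro b z; rw [Fin.prod_univ_succ]; simp
    calc ∑ b : 𝒴, ∑ z : Fin n → 𝒴, ∏ i, F i ((Fin.cons b z : Fin (n+1) → 𝒴) i)
        = ∑ b : 𝒴, ∑ z : Fin n → 𝒴, F 0 b * ∏ i : Fin n, F i.succ (z i) :=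
          Finset.sum_congr rfl fun b _ => Finset.sum_congr rfl fun z _ => hcons b z
      _ = ∑ b : 𝒴, F 0 b * ∑ z : Fin n → 𝒴, ∏ i : Fin n, F i.succ (z i) :=
          Finset.sum_congr rfl fun b _ => by rw [Finset.mul_sum]
      _ = (∑ b : 𝒴, F 0 b) * ∏ i : Fin n, ∑ b, F i.succ b := by
          rw [ih (fun i => F i.succ), ← Finset.sum_mul]
      _ = ∏ i, ∑ b, F i b := by rw [Fin.prod_univ_succ]

lemma var_le_sq' {α : Type*} [Fintype α] (p X : α → ℝ) (hp1 : ∑ a, p a = 1) (t : ℝ) :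
    (∑ a, p a * X a ^ 2) - (∑ a, p a * X a) ^ 2 ≤ ∑ a, p a * (X a - t) ^ 2 := by
  have expand : ∑ a, p a * (X a - t) ^ 2
      = (∑ a, p a * X a ^ 2) - 2 * t * (∑ a, p a * X a) + t ^ 2 * ∑ a, p a := by
    have h1 : ∀ a, p a * (X a - t) ^ 2
        = p a * X a ^ 2 - 2 * t * (p a * X a) + t ^ 2 * p a := fun a => by ring
    rw [Finset.sum_congr rfl fun a _ => h1 a, Finset.sum_add_distrib,
      Finset.sum_sub_distrib, ← Finset.mul_sum, ← Finset.mul_sum]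
  rw [expand, hp1]
  nlinarith [sq_nonneg (t - ∑ a, p a * X a)]

/-- Efron–Stein / tensorization variance bound for a product measure on `Fin n → 𝒴`,
for a function with one-coordinate oscillation at most `κ`. -/
lemma es_var : ∀ (n : ℕ) (q : Fin n → 𝒴 → ℝ), (∀ i b, 0 ≤ q i b) → (∀ i, ∑ b, q i b = 1) →
    ∀ (κ : ℝ), 0 ≤ κ → ∀ (h : (Fin n → 𝒴) → ℝ),
    (∀ (y : Fin n → 𝒴) (i : Fin n) (b : 𝒴), |h (Function.update y i b) - h y| ≤ κ) →
    (∑ y : Fin n → 𝒴, (∏ i, q i (y i)) * h y ^ 2)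
      - (∑ y : Fin n → 𝒴, (∏ i, q i (y i)) * h y) ^ 2 ≤ n * κ ^ 2 := by
  intro n; induction n with
  | zero =>
    intro q hq0 hq1 κ hκ h hosc
    simp
  | succ n ih =>
    intro q hq0 hq1 κ hκ h hosc
    set q' : Fin n → 𝒴 → ℝ := fun i => q i.succ with hq'def
    have hq'0 : ∀ i b, 0 ≤ q' i b := fun i b => hq0 _ _
    have hq'1 : ∀ i, ∑ b, q' i b = 1 := fun i => hq1 _
    have hQ'0 : ∀ z : Fin n → 𝒴, 0 ≤ ∏ i, q' i (z i) :=
      fun z => Finset.prod_nonneg fun i _ => hq'0 i _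
    have hQ'1 : ∑ z : Fin n → 𝒴, ∏ i, q' i (z i) = 1 := by
      rw [sum_prod_eq']; exact Finset.prod_eq_one fun i _ => hq'1 i
    have hY : Nonempty 𝒴 := by
      by_contra hc
      have hIE : IsEmpty 𝒴 := not_nonempty_iff.mp hc
      have h0 := hq1 0
      rw [Finset.univ_eq_empty, Finset.sum_empty] at h0
      exact one_ne_zero h0.symm
    have hsplit : ∀ G : (Fin (n+1) → 𝒴) → ℝ,
        ∑ y : Fin (n+1) → 𝒴, G y = ∑ b : 𝒴, ∑ z : Fin n → 𝒴, G (Fin.cons b z) := by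
      intro G
      rw [← Equiv.sum_comp (Fin.consEquiv (fun _ : Fin (n+1) => 𝒴)) G, Fintype.sum_prod_type]
      rfl
    have hprod : ∀ (b : 𝒴) (z : Fin n → 𝒴),
        (∏ i, q i ((Fin.cons b z : Fin (n+1) → 𝒴) i)) = q 0 b * ∏ i, q' i (z i) := by
      intro b z; rw [Fin.prod_univ_succ]; simp [hq'def]
    set m : 𝒴 → ℝ := fun b => ∑ z : Fin n → 𝒴, (∏ i, q' i (z i)) * h (Fin.cons b z) with hmdef
    have e2 : (∑ y : Fin (n+1) → 𝒴, (∏ i, q i (y i)) * h y ^ 2)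
        = ∑ b : 𝒴, q 0 b * ∑ z : Fin n → 𝒴, (∏ i, q' i (z i)) * h (Fin.cons b z) ^ 2 := by
      rw [hsplit (fun y => (∏ i, q i (y i)) * h y ^ 2)]
      refine Finset.sum_congr rfl fun b _ => ?_
      rw [Finset.mul_sum]
      exact Finset.sum_congr rfl fun z _ => by rw [hprod b z]; ring
    have e1 : (∑ y : Fin (n+1) → 𝒴, (∏ i, q i (y i)) * h y) = ∑ b : 𝒴, q 0 b * m b := by
      rw [hsplit (fun y => (∏ i, q i (y i)) * h y)]
      refine Finset.sum_congr rfl fun b _ => ?_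
      rw [hmdef, Finset.mul_sum]
      exact Finset.sum_congr rfl fun z _ => by rw [hprod b z]; ring
    have hinner : ∀ b : 𝒴, (∑ z : Fin n → 𝒴, (∏ i, q' i (z i)) * h (Fin.cons b z) ^ 2)
        ≤ m b ^ 2 + n * κ ^ 2 := by
      intro b
      have hosc' : ∀ (z : Fin n → 𝒴) (i : Fin n) (b' : 𝒴),
          |h (Fin.cons b (Function.update z i b')) - h (Fin.cons b z)| ≤ κ := by
        intro z i b'
        rw [Fin.cons_update]
        exact hosc _ _ _
      have := ih q' hq'0 hq'1 κ hκ (fun z => h (Fin.cons b z)) hosc'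
      rw [hmdef]
      linarith
    have houter : ∀ b b' : 𝒴, |m b - m b'| ≤ κ := by
      intro b b'
      have hdiff : ∀ z : Fin n → 𝒴, |h (Fin.cons b z) - h (Fin.cons b' z)| ≤ κ := by
        intro z
        have := hosc (Fin.cons b' z) 0 b
        rwa [Fin.update_cons_zero] at this
      have : m b - m b' = ∑ z : Fin n → 𝒴, (∏ i, q' i (z i)) * (h (Fin.cons b z) - h (Fin.cons b' z)) := by
        rw [hmdef, ← Finset.sum_sub_distrib]
        exact Finset.sum_congr rfl fun z _ => by ring
      rw [this]
      calc |∑ z : Fin n → 𝒴, (∏ i, q' i (z i)) * (h (Fin.cons b z) - h (Fin.cons b' z))|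
          ≤ ∑ z : Fin n → 𝒴, |(∏ i, q' i (z i)) * (h (Fin.cons b z) - h (Fin.cons b' z))| :=
            Finset.abs_sum_le_sum_abs _ _
        _ ≤ ∑ z : Fin n → 𝒴, (∏ i, q' i (z i)) * κ := by
            refine Finset.sum_le_sum fun z _ => ?_
            rw [abs_mul, abs_of_nonneg (hQ'0 z)]
            exact mul_le_mul_of_nonneg_left (hdiff z) (hQ'0 z)
        _ = κ := by rw [← Finset.sum_mul, hQ'1, one_mul]
    have houtvar : (∑ b, q 0 b * m b ^ 2) - (∑ b, q 0 b * m b) ^ 2 ≤ κ ^ 2 := by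
      obtain ⟨b₀⟩ := hY
      calc (∑ b, q 0 b * m b ^ 2) - (∑ b, q 0 b * m b) ^ 2
          ≤ ∑ b, q 0 b * (m b - m b₀) ^ 2 := var_le_sq' (q 0) m (hq1 0) (m b₀)
        _ ≤ ∑ b, q 0 b * κ ^ 2 := by
            refine Finset.sum_le_sum fun b _ => ?_
            refine mul_le_mul_of_nonneg_left ?_ (hq0 0 b)
            have hab := abs_le.mp (houter b b₀)
            exact sq_le_sq' hab.1 hab.2
        _ = κ ^ 2 := by rw [← Finset.sum_mul, hq1 0, one_mul]
    have step : (∑ y : Fin (n+1) → 𝒴, (∏ i, q i (y i)) * h y ^ 2)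
        ≤ (∑ b, q 0 b * m b ^ 2) + n * κ ^ 2 := by
      rw [e2]
      calc ∑ b : 𝒴, q 0 b * ∑ z : Fin n → 𝒴, (∏ i, q' i (z i)) * h (Fin.cons b z) ^ 2
          ≤ ∑ b : 𝒴, q 0 b * (m b ^ 2 + n * κ ^ 2) := by
            refine Finset.sum_le_sum fun b _ => mul_le_mul_of_nonneg_left (hinner b) (hq0 0 b)
        _ = (∑ b, q 0 b * m b ^ 2) + (∑ b, q 0 b) * (n * κ ^ 2) := by
            rw [Finset.sum_mul, ← Finset.sum_add_distrib]
            exact Finset.sum_congr rfl fun b _ => by ring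
        _ = (∑ b, q 0 b * m b ^ 2) + n * κ ^ 2 := by rw [hq1 0, one_mul]
    rw [e1]
    push_cast
    linarith

/-- Expectation of `log` of a positive product pmf. -/
lemma sum_prod_mul_log (n : ℕ) (q : Fin n → 𝒴 → ℝ) (hq0 : ∀ i b, 0 < q i b)
    (hq1 : ∀ i, ∑ b, q i b = 1) :
    ∑ y : Fin n → 𝒴, (∏ i, q i (y i)) * Real.log (∏ i, q i (y i))
      = ∑ i : Fin n, ∑ b, q i b * Real.log (q i b) := by
  have hlog : ∀ y : Fin n → 𝒴, Real.log (∏ i, q i (y i)) = ∑ i, Real.log (q i (y i)) :=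
    fun y => Real.log_prod fun i _ => ne_of_gt (hq0 i (y i))
  calc ∑ y : Fin n → 𝒴, (∏ i, q i (y i)) * Real.log (∏ i, q i (y i))
      = ∑ y : Fin n → 𝒴, ∑ i : Fin n, (∏ k, q k (y k)) * Real.log (q i (y i)) := by
        refine Finset.sum_congr rfl fun y _ => ?_
        rw [hlog y, Finset.mul_sum]
    _ = ∑ i : Fin n, ∑ y : Fin n → 𝒴, (∏ k, q k (y k)) * Real.log (q i (y i)) :=
        Finset.sum_comm
    _ = ∑ i : Fin n, ∑ b, q i b * Real.log (q i b) := by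
        refine Finset.sum_congr rfl fun i _ => ?_
        classical
        set G : Fin n → 𝒴 → ℝ :=
          fun k b => if k = i then q k b * Real.log (q k b) else q k b with hGdef
        have hpt : ∀ y : Fin n → 𝒴, (∏ k, q k (y k)) * Real.log (q i (y i)) = ∏ k, G k (y k) := by
          intro y
          rw [← Finset.mul_prod_erase Finset.univ (fun k => q k (y k)) (Finset.mem_univ i),
            ← Finset.mul_prod_erase Finset.univ (fun k => G k (y k)) (Finset.mem_univ i)]
          have h1 : G i (y i) = q i (y i) * Real.log (q i (y i)) := by rw [hGdef]; simp
          have h2 : ∏ k ∈ Finset.univ.erase i, G k (y k) = ∏ k ∈ Finset.univ.erase i, q k (y k) := by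
            refine Finset.prod_congr rfl fun k hk => ?_
            rw [hGdef]; simp [(Finset.mem_erase.mp hk).1]
          rw [h1, h2]; ring
        rw [Finset.sum_congr rfl fun y _ => hpt y, sum_prod_eq']
        rw [← Finset.mul_prod_erase Finset.univ (fun k => ∑ b, G k b) (Finset.mem_univ i)]
        have h3 : (∑ b, G i b) = ∑ b, q i b * Real.log (q i b) := by
          refine Finset.sum_congr rfl fun b _ => ?_
          rw [hGdef]; simp
        have h4 : ∏ k ∈ Finset.univ.erase i, (∑ b, G k b) = 1 := by
          refine Finset.prod_eq_one fun k hk => ?_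
          have : (∑ b, G k b) = ∑ b, q k b := by
            refine Finset.sum_congr rfl fun b _ => ?_
            rw [hGdef]; simp [(Finset.mem_erase.mp hk).1]
          rw [this, hq1 k]
        rw [h3, h4, mul_one]


end Aux2

section Helpers

variable {α : Type*} [Fintype α]

lemma cheb' (p X : α → ℝ) (hp0 : ∀ a, 0 ≤ p a) (ν u : ℝ) (hu : 0 < u)
    [DecidablePred fun a => X a < ν - u] :
    (∑ a ∈ Finset.univ.filter (fun a => X a < ν - u), p a) * u ^ 2
      ≤ ∑ a, p a * (X a - ν) ^ 2 := by
  calc (∑ a ∈ Finset.univ.filter (fun a => X a < ν - u), p a) * u ^ 2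
      = ∑ a ∈ Finset.univ.filter (fun a => X a < ν - u), p a * u ^ 2 := by
        rw [Finset.sum_mul]
    _ ≤ ∑ a ∈ Finset.univ.filter (fun a => X a < ν - u), p a * (X a - ν) ^ 2 := by
        refine Finset.sum_le_sum fun a ha => ?_
        have hX : X a < ν - u := (Finset.mem_filter.mp ha).2
        have h2 : u ^ 2 ≤ (X a - ν) ^ 2 := by nlinarith
        exact mul_le_mul_of_nonneg_left h2 (hp0 a)
    _ ≤ ∑ a, p a * (X a - ν) ^ 2 := by
        refine Finset.sum_le_sum_of_subset_of_nonneg (Finset.filter_subset _ _) ?_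
        exact fun a _ _ => mul_nonneg (hp0 a) (sq_nonneg _)

lemma var_eq' (p X : α → ℝ) (hp1 : ∑ a, p a = 1) :
    ∑ a, p a * (X a - (∑ a, p a * X a)) ^ 2
      = (∑ a, p a * X a ^ 2) - (∑ a, p a * X a) ^ 2 := by
  have h1 : ∀ a, p a * (X a - (∑ a, p a * X a)) ^ 2
      = p a * X a ^ 2 - 2 * (∑ a, p a * X a) * (p a * X a)
          + (∑ a, p a * X a) ^ 2 * p a := fun a => by ring
  rw [Finset.sum_congr rfl fun a _ => h1 a, Finset.sum_add_distrib,
    Finset.sum_sub_distrib, ← Finset.mul_sum, ← Finset.mul_sum, hp1]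
  ring

lemma sq_le_four_exp (z : ℝ) (hz : 0 ≤ z) : z ^ 2 ≤ 4 * Real.exp z := by
  have h1 : z / 2 + 1 ≤ Real.exp (z / 2) := Real.add_one_le_exp _
  have h2 : (0:ℝ) < Real.exp (z / 2) := Real.exp_pos _
  have h3 : z ≤ 2 * Real.exp (z / 2) := by linarith
  have h4 : z ^ 2 ≤ (2 * Real.exp (z / 2)) ^ 2 := pow_le_pow_left₀ hz h3 2
  have h5 : Real.exp (z / 2) * Real.exp (z / 2) = Real.exp z := by
    rw [← Real.exp_add]; ring_nf
  nlinarith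


lemma key_arith (l eps nn : ℝ) (hl0 : 0 ≤ l) (he : 0 < 1 - eps) (hn : 1 ≤ nn) :
    nn * (2 * l) ^ 2 ≤ (1 - eps) / 2 * ((l + 1) ^ 2 * (8 / (1 - eps)) * nn) := by
  have h1 : (1 - eps) / 2 * ((l + 1) ^ 2 * (8 / (1 - eps))) = 4 * (l + 1) ^ 2 := by
    field_simp
    ring
  have h2 : (2 * l) ^ 2 ≤ 4 * (l + 1) ^ 2 := by nlinarith
  calc nn * (2 * l) ^ 2 ≤ nn * (4 * (l + 1) ^ 2) :=
        mul_le_mul_of_nonneg_left h2 (by linarith)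
    _ = ((1 - eps) / 2 * ((l + 1) ^ 2 * (8 / (1 - eps)))) * nn := by rw [h1]; ring
    _ = (1 - eps) / 2 * ((l + 1) ^ 2 * (8 / (1 - eps)) * nn) := by ring

lemma habs_arith (v B : ℝ) (hv : 0 ≤ v) (hB : 0 ≤ B) :
    v ^ 2 ≤ 2 * B ^ 2 + 8 * Real.exp (v - B) := by
  rcases le_or_gt v B with hle | hgt
  · have h1 : v ^ 2 ≤ B ^ 2 := pow_le_pow_left₀ hv hle 2
    have h2 := Real.exp_pos (v - B)
    nlinarith
  · have hz : 0 ≤ v - B := by linarith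
    have h1 := sq_le_four_exp (v - B) hz
    nlinarith [sq_nonneg (v - 2 * B)]

lemma bsq_arith (u k : ℝ) : (u + k) ^ 2 ≤ 2 * u ^ 2 + 2 * k ^ 2 := by
  have h : (u + k) ^ 2 = (2 * u ^ 2 + 2 * k ^ 2) - (u - k) ^ 2 := by ring
  rw [h]
  exact sub_le_self _ (sq_nonneg _)

end Helpers


/-- Theorem 23 of the paper: for a DMC with positive transition matrix and
constant conditional output entropy `H(W(·|x))`, there are a constant
`a = a(ε, W) > 0` and a threshold `N` such that every `(n, Mₙ, ε)_{max,det}` code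
with `n ≥ N` satisfies `Var[log P_{Y^n}(Y^n)] ≤ a n`. -/
theorem output_logvar_linear_DMC
    {𝒳 𝒴 : Type*} [Fintype 𝒳] [Fintype 𝒴]
    (W : 𝒳 → 𝒴 → ℝ) (hW : IsDMC W) (hWpos : ∀ x y, 0 < W x y)
    (hHconst : ∀ x x' : 𝒳,
      -∑ y, W x y * Real.log (W x y) = -∑ y, W x' y * Real.log (W x' y))
    (ε : ℝ) (hε0 : 0 ≤ ε) (hε1 : ε < 1) :
    ∃ a : ℝ, 0 < a ∧ ∃ N : ℕ,
      ∀ n : ℕ, N ≤ n → ∀ (M : ℕ), 0 < M →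
        ∀ (c : Fin M → Fin n → 𝒳) (g : (Fin n → 𝒴) → Fin M → ℝ),
          (∀ y, IsPMF (g y)) →
          (∀ j : Fin M, ∑ y, prodW W n (c j) y * (1 - g y j) ≤ ε) →
          outLogVar W c ≤ a * n := by
  classical
  have hε' : (0:ℝ) < 1 - ε := by linarith
  by_cases hXne : Nonempty 𝒳
  swap
  · refine ⟨1, one_pos, 1, ?_⟩
    intro n hn M hM c g hg herr
    exact absurd ⟨c ⟨0, hM⟩ ⟨0, by omega⟩⟩ hXne
  by_cases hYne : Nonempty 𝒴
  swap
  · refine ⟨1, one_pos, 1, ?_⟩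
    intro n hn M hM c g hg herr
    obtain ⟨x₀⟩ := hXne
    haveI : IsEmpty 𝒴 := not_nonempty_iff.mp hYne
    have h0 := (hW x₀).2
    rw [Finset.univ_eq_empty, Finset.sum_empty] at h0
    exact absurd h0.symm one_ne_zero
  obtain ⟨x₀⟩ := hXne
  haveI := hYne
  haveI : Nonempty 𝒳 := ⟨x₀⟩
  -- global constants
  set wmin : ℝ := Finset.univ.inf' Finset.univ_nonempty (fun p : 𝒳 × 𝒴 => W p.1 p.2) with hwmin
  set wmax : ℝ := Finset.univ.sup' Finset.univ_nonempty (fun p : 𝒳 × 𝒴 => W p.1 p.2) with hwmax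
  have hwmin_pos : 0 < wmin := by
    rw [hwmin]
    exact (Finset.lt_inf'_iff _).mpr fun b _ => hWpos b.1 b.2
  have hwmin_le : ∀ x y, wmin ≤ W x y := by
    intro x y
    rw [hwmin]
    exact Finset.inf'_le (fun p : 𝒳 × 𝒴 => W p.1 p.2) (Finset.mem_univ (x, y))
  have hle_wmax : ∀ x y, W x y ≤ wmax := by
    intro x y
    rw [hwmax]
    exact Finset.le_sup' (fun p : 𝒳 × 𝒴 => W p.1 p.2) (Finset.mem_univ (x, y))
  have hwmax_pos : 0 < wmax :=
    lt_of_lt_of_le hwmin_pos (le_trans (hwmin_le x₀ (Classical.arbitrary 𝒴))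
      (hle_wmax x₀ (Classical.arbitrary 𝒴)))
  set l : ℝ := Real.log wmax - Real.log wmin with hl
  have hl0 : 0 ≤ l := by
    rw [hl]
    have := Real.log_le_log hwmin_pos (le_trans (hwmin_le x₀ (Classical.arbitrary 𝒴))
      (hle_wmax x₀ (Classical.arbitrary 𝒴)))
    linarith
  set K : ℝ := 2 / (1 - ε) with hK
  have hK1 : 1 ≤ K := by rw [hK, le_div_iff₀ hε']; linarith
  have hK0 : (0:ℝ) < K := lt_of_lt_of_le one_pos hK1
  have hlogK0 : 0 ≤ Real.log K := Real.log_nonneg hK1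
  set lam : ℝ := (l + 1) * Real.sqrt (8 / (1 - ε)) with hlam
  have hlam_sq : lam ^ 2 = (l + 1) ^ 2 * (8 / (1 - ε)) := by
    rw [hlam, mul_pow, Real.sq_sqrt (by positivity)]
  have hlam_pos : 0 < lam := by
    rw [hlam]
    exact mul_pos (by linarith) (Real.sqrt_pos.mpr (by positivity))
  refine ⟨l ^ 2 + 4 * lam ^ 2 + 4 * Real.log K ^ 2 + 8, by positivity, 1, ?_⟩
  intro n hn M hM c g hgpmf herr
  have hn1 : (1:ℝ) ≤ (n:ℝ) := by exact_mod_cast hn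
  have hMR : (0:ℝ) < (M:ℝ) := by exact_mod_cast hM
  -- abbreviations
  obtain ⟨Q, hQdef⟩ : ∃ Q : Fin M → (Fin n → 𝒴) → ℝ,
      ∀ j y, Q j y = ∏ i, W (c j i) (y i) := ⟨_, fun _ _ => rfl⟩
  obtain ⟨SM, hSMdef⟩ : ∃ SM : (Fin n → 𝒴) → ℝ, ∀ y, SM y = ∑ j, Q j y := ⟨_, fun _ => rfl⟩
  obtain ⟨f, hfdef⟩ : ∃ f : (Fin n → 𝒴) → ℝ, ∀ y, f y = Real.log (codeOut W c y) :=
    ⟨_, fun _ => rfl⟩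
  obtain ⟨R, hRdef⟩ : ∃ R : Fin M → (Fin n → 𝒴) → ℝ,
      ∀ j y, R j y = Real.log (SM y) - Real.log (Q j y) := ⟨_, fun _ _ => rfl⟩
  have hQpos : ∀ j y, 0 < Q j y := fun j y => by
    rw [hQdef]; exact Finset.prod_pos fun i _ => hWpos _ _
  have hQ1 : ∀ j, ∑ y, Q j y = 1 := by
    intro j
    have : ∑ y : Fin n → 𝒴, ∏ i, W (c j i) (y i) = 1 :=
      (sum_prod_eq' n (fun i => W (c j i))).trans (Finset.prod_eq_one fun i _ => (hW _).2)
    rw [Finset.sum_congr rfl fun y _ => hQdef j y, this]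
  have hSMpos : ∀ y, 0 < SM y := fun y => by
    rw [hSMdef]
    exact Finset.sum_pos (fun j _ => hQpos j y) ⟨⟨0, hM⟩, Finset.mem_univ _⟩
  have hSM_1 : ∑ y, SM y = (M:ℝ) := by
    rw [Finset.sum_congr rfl fun y _ => hSMdef y, Finset.sum_comm,
      Finset.sum_congr rfl fun j _ => hQ1 j]
    simp
  have hcodeOut : ∀ y, codeOut W c y = (M:ℝ)⁻¹ * SM y := by
    intro y
    rw [hSMdef y]
    unfold codeOut
    congr 1
    refine Finset.sum_congr rfl fun j _ => ?_
    rw [hQdef j y]; rfl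
  have hPpos : ∀ y, 0 < codeOut W c y := fun y => by
    rw [hcodeOut y]; exact mul_pos (inv_pos.mpr hMR) (hSMpos y)
  have hPsum1 : ∑ y, codeOut W c y = 1 := by
    rw [Finset.sum_congr rfl fun y _ => hcodeOut y, ← Finset.mul_sum, hSM_1,
      inv_mul_cancel₀ (ne_of_gt hMR)]
  have hf_eq : ∀ y, f y = Real.log (SM y) - Real.log M := by
    intro y
    rw [hfdef y, hcodeOut y, Real.log_mul (by positivity) (ne_of_gt (hSMpos y)),
      Real.log_inv]
    ring
  have hR0 : ∀ j y, 0 ≤ R j y := by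
    intro j y
    rw [hRdef]
    have h1 : Q j y ≤ SM y := by
      rw [hSMdef]
      exact Finset.single_le_sum (fun k _ => le_of_lt (hQpos k y)) (Finset.mem_univ j)
    have := Real.log_le_log (hQpos j y) h1
    linarith
  -- oscillation bounds
  have key_ratio : ∀ (x : Fin n → 𝒳) (y : Fin n → 𝒴) (i : Fin n) (b : 𝒴),
      (∏ i', W (x i') (Function.update y i b i')) * wmin
        ≤ wmax * ∏ i', W (x i') (y i') := by
    intro x y i b
    have e1 : ∏ i', W (x i') (Function.update y i b i')
        = W (x i) b * ∏ i' ∈ Finset.univ.erase i, W (x i') (y i') := by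
      rw [← Finset.mul_prod_erase Finset.univ (fun i' => W (x i') (Function.update y i b i'))
        (Finset.mem_univ i), Function.update_self]
      congr 1
      refine Finset.prod_congr rfl fun k hk => ?_
      rw [Function.update_of_ne (Finset.mem_erase.mp hk).1]
    have e2 : ∏ i', W (x i') (y i')
        = W (x i) (y i) * ∏ i' ∈ Finset.univ.erase i, W (x i') (y i') := by
      rw [← Finset.mul_prod_erase Finset.univ (fun i' => W (x i') (y i')) (Finset.mem_univ i)]
    have hrest : 0 ≤ ∏ i' ∈ Finset.univ.erase i, W (x i') (y i') :=
      Finset.prod_nonneg fun k _ => le_of_lt (hWpos _ _)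
    rw [e1, e2]
    have h1 : W (x i) b * wmin ≤ wmax * W (x i) (y i) :=
      mul_le_mul (hle_wmax _ _) (hwmin_le _ _) (le_of_lt hwmin_pos)
        (le_of_lt hwmax_pos)
    nlinarith
  have hosc_gen : ∀ A B : ℝ, 0 < A → 0 < B → A * wmin ≤ wmax * B →
      Real.log A - Real.log B ≤ l := by
    intro A B hA hB hle
    have hAB : A ≤ (wmax / wmin) * B := by
      rw [div_mul_eq_mul_div, le_div_iff₀ hwmin_pos]
      linarith
    have := Real.log_le_log hA hAB
    rw [Real.log_mul (by positivity) (ne_of_gt hB), Real.log_div (ne_of_gt hwmax_pos)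
      (ne_of_gt hwmin_pos)] at this
    rw [hl]
    linarith
  have oscQ : ∀ j (y : Fin n → 𝒴) (i : Fin n) (b : 𝒴),
      |Real.log (Q j (Function.update y i b)) - Real.log (Q j y)| ≤ l := by
    intro j y i b
    have h1 : Real.log (Q j (Function.update y i b)) - Real.log (Q j y) ≤ l := by
      refine hosc_gen _ _ (hQpos _ _) (hQpos _ _) ?_
      rw [hQdef, hQdef]
      exact key_ratio (c j) y i b
    have h2 : Real.log (Q j y) - Real.log (Q j (Function.update y i b)) ≤ l := by
      refine hosc_gen _ _ (hQpos _ _) (hQpos _ _) ?_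
      rw [hQdef, hQdef]
      have := key_ratio (c j) (Function.update y i b) i (y i)
      rwa [Function.update_idem, Function.update_eq_self] at this
    rw [abs_le]
    constructor <;> linarith
  have oscSM : ∀ (y : Fin n → 𝒴) (i : Fin n) (b : 𝒴),
      |Real.log (SM (Function.update y i b)) - Real.log (SM y)| ≤ l := by
    intro y i b
    have hratio : ∀ (y y' : Fin n → 𝒴) (i : Fin n) (b : 𝒴), y' = Function.update y i b →
        SM y' * wmin ≤ wmax * SM y := by
      intro y y' i b hy'
      rw [hSMdef, hSMdef, Finset.sum_mul, Finset.mul_sum]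
      refine Finset.sum_le_sum fun j _ => ?_
      rw [hQdef, hQdef, hy']
      exact key_ratio (c j) y i b
    have h1 : Real.log (SM (Function.update y i b)) - Real.log (SM y) ≤ l :=
      hosc_gen _ _ (hSMpos _) (hSMpos _) (hratio y _ i b rfl)
    have h2 : Real.log (SM y) - Real.log (SM (Function.update y i b)) ≤ l := by
      refine hosc_gen _ _ (hSMpos _) (hSMpos _) (hratio (Function.update y i b) y i (y i) ?_)
      rw [Function.update_idem, Function.update_eq_self]
    rw [abs_le]
    constructor <;> linarith
  have oscf : ∀ (y : Fin n → 𝒴) (i : Fin n) (b : 𝒴),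
      |f (Function.update y i b) - f y| ≤ l := by
    intro y i b
    rw [hf_eq, hf_eq, sub_sub_sub_cancel_right]
    exact oscSM y i b
  have oscR : ∀ j (y : Fin n → 𝒴) (i : Fin n) (b : 𝒴),
      |R j (Function.update y i b) - R j y| ≤ 2 * l := by
    intro j y i b
    have he : R j (Function.update y i b) - R j y
        = (Real.log (SM (Function.update y i b)) - Real.log (SM y))
          - (Real.log (Q j (Function.update y i b)) - Real.log (Q j y)) := by
      rw [hRdef, hRdef]; ring
    rw [he]
    have := abs_sub (Real.log (SM (Function.update y i b)) - Real.log (SM y))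
      (Real.log (Q j (Function.update y i b)) - Real.log (Q j y))
    have h1 := oscSM y i b
    have h2 := oscQ j y i b
    linarith
  -- variance bounds within codewords
  have hVf : ∀ j, (∑ y, Q j y * f y ^ 2) - (∑ y, Q j y * f y) ^ 2 ≤ n * l ^ 2 := by
    intro j
    have e1 : (∑ y, Q j y * f y ^ 2) = ∑ y : Fin n → 𝒴, (∏ i, W (c j i) (y i)) * f y ^ 2 :=
      Finset.sum_congr rfl fun y _ => by rw [hQdef j y]
    have e2 : (∑ y, Q j y * f y) = ∑ y : Fin n → 𝒴, (∏ i, W (c j i) (y i)) * f y :=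
      Finset.sum_congr rfl fun y _ => by rw [hQdef j y]
    rw [e1, e2]
    exact es_var n (fun i => W (c j i)) (fun i b => le_of_lt (hWpos _ _))
      (fun i => (hW _).2) l hl0 f oscf
  have hVR : ∀ j, (∑ y, Q j y * R j y ^ 2) - (∑ y, Q j y * R j y) ^ 2
      ≤ n * (2 * l) ^ 2 := by
    intro j
    have e1 : (∑ y, Q j y * R j y ^ 2) = ∑ y : Fin n → 𝒴, (∏ i, W (c j i) (y i)) * R j y ^ 2 :=
      Finset.sum_congr rfl fun y _ => by rw [hQdef j y]
    have e2 : (∑ y, Q j y * R j y) = ∑ y : Fin n → 𝒴, (∏ i, W (c j i) (y i)) * R j y :=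
      Finset.sum_congr rfl fun y _ => by rw [hQdef j y]
    rw [e1, e2]
    exact es_var n (fun i => W (c j i)) (fun i b => le_of_lt (hWpos _ _))
      (fun i => (hW _).2) (2 * l) (by linarith) (R j) (oscR j)
  -- entropy identity
  have hent : ∀ x : 𝒳, ∑ b, W x b * Real.log (W x b)
      = ∑ b, W x₀ b * Real.log (W x₀ b) := by
    intro x
    have := hHconst x x₀
    linarith
  have hQlog : ∀ j, ∑ y, Q j y * Real.log (Q j y)
      = n * ∑ b, W x₀ b * Real.log (W x₀ b) := by
    intro j
    have e1 : (∑ y, Q j y * Real.log (Q j y))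
        = ∑ y : Fin n → 𝒴, (∏ i, W (c j i) (y i)) * Real.log (∏ i, W (c j i) (y i)) :=
      Finset.sum_congr rfl fun y _ => by rw [hQdef j y]
    have e2 : (∑ i : Fin n, ∑ b, W (c j i) b * Real.log (W (c j i) b))
        = ∑ i : Fin n, ∑ b, W x₀ b * Real.log (W x₀ b) :=
      Finset.sum_congr rfl fun i _ => hent (c j i)
    rw [e1, sum_prod_mul_log n (fun i => W (c j i)) (fun i b => hWpos _ _)
      (fun i => (hW _).2), e2, Finset.sum_const, Finset.card_univ, Fintype.card_fin,
      nsmul_eq_mul]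
  have hmu : ∀ j, (∑ y, Q j y * f y)
      = (∑ y, Q j y * R j y) + n * (∑ b, W x₀ b * Real.log (W x₀ b)) - Real.log M := by
    intro j
    have hpt : ∀ y, Q j y * f y
        = Q j y * R j y + Q j y * Real.log (Q j y) - Q j y * Real.log M := by
      intro y
      rw [hf_eq y, hRdef j y]
      ring
    rw [Finset.sum_congr rfl fun y _ => hpt y, Finset.sum_sub_distrib,
      Finset.sum_add_distrib, hQlog j, ← Finset.sum_mul, hQ1 j, one_mul]
  -- decoder facts
  have hg0 : ∀ y j, 0 ≤ g y j := fun y j => (hgpmf y).1 j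
  have hgsum : ∀ y, ∑ j, g y j = 1 := fun y => (hgpmf y).2
  have hgle1 : ∀ y j, g y j ≤ 1 := by
    intro y j
    have h := Finset.single_le_sum (f := g y) (fun k _ => hg0 y k) (Finset.mem_univ j)
    rw [hgsum y] at h
    exact h
  have hEg : ∀ j, 1 - ε ≤ ∑ y, Q j y * g y j := by
    intro j
    have h := herr j
    have he : ∀ y : Fin n → 𝒴, prodW W n (c j) y = Q j y := fun y => by
      rw [hQdef j y]; rfl
    have e1 : (∑ y, prodW W n (c j) y * (1 - g y j)) = ∑ y, Q j y * (1 - g y j) :=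
      Finset.sum_congr rfl fun y _ => by rw [he y]
    rw [e1] at h
    have hexp : ∑ y, Q j y * (1 - g y j) = 1 - ∑ y, Q j y * g y j := by
      rw [Finset.sum_congr rfl fun y (_ : y ∈ Finset.univ) =>
        (by ring : Q j y * (1 - g y j) = Q j y - Q j y * g y j),
        Finset.sum_sub_distrib, hQ1 j]
    rw [hexp] at h
    linarith
  -- the decoding-mass lower bound
  set u : ℝ := lam * Real.sqrt n with hu
  have hu_pos : 0 < u := by
    rw [hu]
    exact mul_pos hlam_pos (Real.sqrt_pos.mpr (by linarith))
  have hu_sq : u ^ 2 = lam ^ 2 * n := by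
    rw [hu, mul_pow, Real.sq_sqrt (by positivity)]
  have halow : ∀ j, (M:ℝ)⁻¹ * Real.exp ((∑ y, Q j y * R j y) - u) * ((1 - ε) / 2)
      ≤ ∑ y, codeOut W c y * g y j := by
    intro j
    have hvar_eq : ∑ y, Q j y * (R j y - (∑ y, Q j y * R j y)) ^ 2
        = (∑ y, Q j y * R j y ^ 2) - (∑ y, Q j y * R j y) ^ 2 :=
      var_eq' (Q j) (R j) (hQ1 j)
    have hcheb := cheb' (Q j) (R j) (fun y => le_of_lt (hQpos j y))
      (∑ y, Q j y * R j y) u hu_pos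
    rw [hvar_eq] at hcheb
    have hbad_small : ∑ y ∈ Finset.univ.filter
        (fun y => R j y < (∑ y, Q j y * R j y) - u), Q j y ≤ (1 - ε) / 2 := by
      have h1 : (∑ y ∈ Finset.univ.filter
          (fun y => R j y < (∑ y, Q j y * R j y) - u), Q j y) * u ^ 2
          ≤ n * (2 * l) ^ 2 := le_trans hcheb (hVR j)
      have hkey : (n:ℝ) * (2 * l) ^ 2 ≤ (1 - ε) / 2 * u ^ 2 := by
        rw [hu_sq, hlam_sq]
        exact key_arith l ε n hl0 hε' hn1
      have hu2 : (0:ℝ) < u ^ 2 := by positivity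
      exact le_of_mul_le_mul_right (le_trans h1 hkey) hu2
    have hGoodg : (1 - ε) / 2 ≤ ∑ y ∈ Finset.univ.filter
        (fun y => ¬ (R j y < (∑ y, Q j y * R j y) - u)), Q j y * g y j := by
      have hsplitg := Finset.sum_filter_add_sum_filter_not Finset.univ
        (fun y => R j y < (∑ y, Q j y * R j y) - u) (fun y => Q j y * g y j)
      have hbadg : ∑ y ∈ Finset.univ.filter
          (fun y => R j y < (∑ y, Q j y * R j y) - u), Q j y * g y j
          ≤ ∑ y ∈ Finset.univ.filter
          (fun y => R j y < (∑ y, Q j y * R j y) - u), Q j y := by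
        refine Finset.sum_le_sum fun y _ => ?_
        exact mul_le_of_le_one_right (le_of_lt (hQpos j y)) (hgle1 y j)
      have := hEg j
      linarith
    have hpt : ∀ y ∈ Finset.univ.filter
        (fun y => ¬ (R j y < (∑ y, Q j y * R j y) - u)),
        (M:ℝ)⁻¹ * Real.exp ((∑ y, Q j y * R j y) - u) * (Q j y * g y j)
          ≤ codeOut W c y * g y j := by
      intro y hy
      have hRge : (∑ y, Q j y * R j y) - u ≤ R j y :=
        not_lt.mp (Finset.mem_filter.mp hy).2
      have hSMeq : SM y = Q j y * Real.exp (R j y) := by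
        rw [hRdef j y, Real.exp_sub, Real.exp_log (hSMpos y), Real.exp_log (hQpos j y)]
        symm
        rw [mul_div_assoc']
        exact mul_div_cancel_left₀ _ (ne_of_gt (hQpos j y))
      have hP_ge : (M:ℝ)⁻¹ * Real.exp ((∑ y, Q j y * R j y) - u) * Q j y
          ≤ codeOut W c y := by
        rw [hcodeOut y, hSMeq]
        have hexp_le : Real.exp ((∑ y, Q j y * R j y) - u) ≤ Real.exp (R j y) :=
          Real.exp_le_exp.mpr hRge
        have hQy := le_of_lt (hQpos j y)
        have hMinv : (0:ℝ) ≤ (M:ℝ)⁻¹ := inv_nonneg.mpr (le_of_lt hMR)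
        calc (M:ℝ)⁻¹ * Real.exp ((∑ y, Q j y * R j y) - u) * Q j y
            = (M:ℝ)⁻¹ * (Real.exp ((∑ y, Q j y * R j y) - u) * Q j y) := by ring
          _ ≤ (M:ℝ)⁻¹ * (Real.exp (R j y) * Q j y) :=
              mul_le_mul_of_nonneg_left (mul_le_mul_of_nonneg_right hexp_le hQy) hMinv
          _ = (M:ℝ)⁻¹ * (Q j y * Real.exp (R j y)) := by ring
      calc (M:ℝ)⁻¹ * Real.exp ((∑ y, Q j y * R j y) - u) * (Q j y * g y j)
          = ((M:ℝ)⁻¹ * Real.exp ((∑ y, Q j y * R j y) - u) * Q j y) * g y j := by ring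
        _ ≤ codeOut W c y * g y j := mul_le_mul_of_nonneg_right hP_ge (hg0 y j)
    calc (M:ℝ)⁻¹ * Real.exp ((∑ y, Q j y * R j y) - u) * ((1 - ε) / 2)
        ≤ (M:ℝ)⁻¹ * Real.exp ((∑ y, Q j y * R j y) - u)
            * ∑ y ∈ Finset.univ.filter
              (fun y => ¬ (R j y < (∑ y, Q j y * R j y) - u)), Q j y * g y j := by
          refine mul_le_mul_of_nonneg_left hGoodg ?_
          positivity
      _ = ∑ y ∈ Finset.univ.filter
            (fun y => ¬ (R j y < (∑ y, Q j y * R j y) - u)),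
            (M:ℝ)⁻¹ * Real.exp ((∑ y, Q j y * R j y) - u) * (Q j y * g y j) := by
          rw [Finset.mul_sum]
      _ ≤ ∑ y ∈ Finset.univ.filter
            (fun y => ¬ (R j y < (∑ y, Q j y * R j y) - u)), codeOut W c y * g y j :=
          Finset.sum_le_sum hpt
      _ ≤ ∑ y, codeOut W c y * g y j := by
          refine Finset.sum_le_sum_of_subset_of_nonneg (Finset.filter_subset _ _) ?_
          exact fun y _ _ => mul_nonneg (le_of_lt (hPpos y)) (hg0 y j)
  -- total decoding mass is 1
  have hasum : ∑ j, ∑ y, codeOut W c y * g y j = 1 := by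
    have e1 : ∑ y : Fin n → 𝒴, ∑ j, codeOut W c y * g y j
        = ∑ y : Fin n → 𝒴, codeOut W c y * ∑ j, g y j :=
      Finset.sum_congr rfl fun y _ => (Finset.mul_sum _ _ _).symm
    have e2 : ∑ y : Fin n → 𝒴, codeOut W c y * ∑ j, g y j = ∑ y, codeOut W c y :=
      Finset.sum_congr rfl fun y _ => by rw [hgsum y, mul_one]
    rw [Finset.sum_comm, e1, e2]
    exact hPsum1
  -- exponential moment bound
  have hexpnu : ∑ j, (M:ℝ)⁻¹ * Real.exp (∑ y, Q j y * R j y) ≤ K * Real.exp u := by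
    have h1 : ∑ j, (M:ℝ)⁻¹ * Real.exp ((∑ y, Q j y * R j y) - u) * ((1 - ε) / 2) ≤ 1 := by
      exact le_trans (Finset.sum_le_sum fun j _ => halow j) (le_of_eq hasum)
    have h2 : ∑ j, (M:ℝ)⁻¹ * Real.exp ((∑ y, Q j y * R j y) - u) * ((1 - ε) / 2)
        = (Real.exp (-u) * ((1 - ε) / 2))
            * ∑ j, (M:ℝ)⁻¹ * Real.exp (∑ y, Q j y * R j y) := by
      rw [Finset.mul_sum]
      refine Finset.sum_congr rfl fun j _ => ?_
      rw [sub_eq_add_neg, Real.exp_add]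
      ring
    rw [h2] at h1
    have hS0 : 0 ≤ ∑ j, (M:ℝ)⁻¹ * Real.exp (∑ y, Q j y * R j y) :=
      Finset.sum_nonneg fun j _ => mul_nonneg (inv_nonneg.mpr (le_of_lt hMR))
        (le_of_lt (Real.exp_pos _))
    have hE1 : Real.exp (-u) * Real.exp u = 1 := by
      rw [← Real.exp_add]; simp
    have hc1 : (1 - ε) / 2 * (2 / (1 - ε)) = 1 := by field_simp
    calc ∑ j, (M:ℝ)⁻¹ * Real.exp (∑ y, Q j y * R j y)
        = (∑ j, (M:ℝ)⁻¹ * Real.exp (∑ y, Q j y * R j y))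
            * ((Real.exp (-u) * Real.exp u) * ((1 - ε) / 2 * (2 / (1 - ε)))) := by
          rw [hE1, hc1]; ring
      _ = ((Real.exp (-u) * ((1 - ε) / 2))
            * ∑ j, (M:ℝ)⁻¹ * Real.exp (∑ y, Q j y * R j y))
            * (Real.exp u * (2 / (1 - ε))) := by ring
      _ ≤ 1 * (Real.exp u * (2 / (1 - ε))) := by
          refine mul_le_mul_of_nonneg_right h1 ?_
          positivity
      _ = K * Real.exp u := by rw [hK]; ring
  -- second moment of nu
  set B : ℝ := u + Real.log K with hB
  have hB0 : 0 ≤ B := by rw [hB]; linarith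
  have hnu0 : ∀ j, 0 ≤ ∑ y, Q j y * R j y :=
    fun j => Finset.sum_nonneg fun y _ => mul_nonneg (le_of_lt (hQpos j y)) (hR0 j y)
  have habs : ∀ v : ℝ, 0 ≤ v → v ^ 2 ≤ 2 * B ^ 2 + 8 * Real.exp (v - B) :=
    fun v hv => habs_arith v B hv hB0
  have hnu2 : ∀ j, (∑ y, Q j y * R j y) ^ 2
      ≤ 2 * B ^ 2 + 8 * Real.exp ((∑ y, Q j y * R j y) - B) :=
    fun j => habs _ (hnu0 j)
  have havg2 : ∑ j, (M:ℝ)⁻¹ * (∑ y, Q j y * R j y) ^ 2 ≤ 2 * B ^ 2 + 8 := by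
    have hsc : ∑ j : Fin M, (M:ℝ)⁻¹ = 1 := by
      rw [Finset.sum_const, Finset.card_univ, Fintype.card_fin, nsmul_eq_mul,
        mul_inv_cancel₀ (ne_of_gt hMR)]
    calc ∑ j, (M:ℝ)⁻¹ * (∑ y, Q j y * R j y) ^ 2
        ≤ ∑ j, (M:ℝ)⁻¹ * (2 * B ^ 2 + 8 * Real.exp ((∑ y, Q j y * R j y) - B)) := by
          refine Finset.sum_le_sum fun j _ => ?_
          exact mul_le_mul_of_nonneg_left (hnu2 j) (inv_nonneg.mpr (le_of_lt hMR))
      _ = (∑ j : Fin M, (M:ℝ)⁻¹) * (2 * B ^ 2)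
            + 8 * Real.exp (-B) * ∑ j, (M:ℝ)⁻¹ * Real.exp (∑ y, Q j y * R j y) := by
          rw [Finset.sum_mul, Finset.mul_sum, ← Finset.sum_add_distrib]
          refine Finset.sum_congr rfl fun j _ => ?_
          rw [sub_eq_add_neg, Real.exp_add]
          ring
      _ ≤ 1 * (2 * B ^ 2) + 8 * Real.exp (-B) * (K * Real.exp u) := by
          rw [hsc]
          exact add_le_add le_rfl
            (mul_le_mul_of_nonneg_left hexpnu (by positivity))
      _ = 2 * B ^ 2 + 8 := by
          rw [hB, neg_add, Real.exp_add, Real.exp_neg, Real.exp_neg, Real.exp_log hK0]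
          field_simp
  -- assemble
  have hmix : ∀ X : (Fin n → 𝒴) → ℝ,
      ∑ y, codeOut W c y * X y = ∑ j, (M:ℝ)⁻¹ * ∑ y, Q j y * X y := by
    intro X
    calc ∑ y, codeOut W c y * X y
        = ∑ y, ∑ j, (M:ℝ)⁻¹ * (Q j y * X y) := by
          refine Finset.sum_congr rfl fun y _ => ?_
          rw [hcodeOut y, hSMdef y, mul_assoc, Finset.sum_mul, Finset.mul_sum]
      _ = ∑ j, ∑ y, (M:ℝ)⁻¹ * (Q j y * X y) := Finset.sum_comm
      _ = ∑ j, (M:ℝ)⁻¹ * ∑ y, Q j y * X y := by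
          refine Finset.sum_congr rfl fun j _ => (Finset.mul_sum _ _ _).symm
  have hmix2 : ∑ y, codeOut W c y * f y ^ 2 = ∑ j, (M:ℝ)⁻¹ * ∑ y, Q j y * f y ^ 2 := by
    have := hmix (fun y => f y ^ 2)
    simpa using this
  have hmix1 : ∑ y, codeOut W c y * f y = ∑ j, (M:ℝ)⁻¹ * ∑ y, Q j y * f y := hmix f
  have hout_eq : outLogVar W c
      = (∑ j, (M:ℝ)⁻¹ * ∑ y, Q j y * f y ^ 2)
        - (∑ j, (M:ℝ)⁻¹ * ∑ y, Q j y * f y) ^ 2 := by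
    unfold outLogVar
    have e0 : ∑ y, codeOut W c y * Real.log (codeOut W c y) ^ 2
        = ∑ y, codeOut W c y * f y ^ 2 :=
      Finset.sum_congr rfl fun y _ => by rw [hfdef y]
    have e0' : ∑ y, codeOut W c y * Real.log (codeOut W c y)
        = ∑ y, codeOut W c y * f y :=
      Finset.sum_congr rfl fun y _ => by rw [hfdef y]
    rw [e0, e0', hmix2, hmix1]
  have hsc : ∑ j : Fin M, (M:ℝ)⁻¹ = 1 := by
    rw [Finset.sum_const, Finset.card_univ, Fintype.card_fin, nsmul_eq_mul,
      mul_inv_cancel₀ (ne_of_gt hMR)]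
  have hvarJ : (∑ j, (M:ℝ)⁻¹ * (∑ y, Q j y * f y) ^ 2)
      - (∑ j, (M:ℝ)⁻¹ * ∑ y, Q j y * f y) ^ 2
      ≤ ∑ j, (M:ℝ)⁻¹ * (∑ y, Q j y * R j y) ^ 2 := by
    have h := var_le_sq' (fun _ : Fin M => (M:ℝ)⁻¹) (fun j => ∑ y, Q j y * f y) hsc
      (n * (∑ b, W x₀ b * Real.log (W x₀ b)) - Real.log M)
    refine le_trans h (le_of_eq (Finset.sum_congr rfl fun j _ => ?_))
    rw [hmu j]
    ring_nf
  have hsplit2 : ∑ j, (M:ℝ)⁻¹ * ∑ y, Q j y * f y ^ 2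
      = (∑ j, (M:ℝ)⁻¹ * ((∑ y, Q j y * f y ^ 2) - (∑ y, Q j y * f y) ^ 2))
        + ∑ j, (M:ℝ)⁻¹ * (∑ y, Q j y * f y) ^ 2 := by
    rw [← Finset.sum_add_distrib]
    refine Finset.sum_congr rfl fun j _ => by ring
  have hVsum : ∑ j, (M:ℝ)⁻¹ * ((∑ y, Q j y * f y ^ 2) - (∑ y, Q j y * f y) ^ 2)
      ≤ (n:ℝ) * l ^ 2 := by
    calc ∑ j, (M:ℝ)⁻¹ * ((∑ y, Q j y * f y ^ 2) - (∑ y, Q j y * f y) ^ 2)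
        ≤ ∑ j, (M:ℝ)⁻¹ * ((n:ℝ) * l ^ 2) := by
          refine Finset.sum_le_sum fun j _ => ?_
          exact mul_le_mul_of_nonneg_left (hVf j) (inv_nonneg.mpr (le_of_lt hMR))
      _ = (n:ℝ) * l ^ 2 := by rw [← Finset.sum_mul, hsc, one_mul]
  have hfinal : outLogVar W c ≤ (n:ℝ) * l ^ 2 + 2 * B ^ 2 + 8 := by
    rw [hout_eq, hsplit2]
    have e3 : ((∑ j, (M:ℝ)⁻¹ * ((∑ y, Q j y * f y ^ 2) - (∑ y, Q j y * f y) ^ 2))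
          + ∑ j, (M:ℝ)⁻¹ * (∑ y, Q j y * f y) ^ 2)
        - (∑ j, (M:ℝ)⁻¹ * ∑ y, Q j y * f y) ^ 2
        = (∑ j, (M:ℝ)⁻¹ * ((∑ y, Q j y * f y ^ 2) - (∑ y, Q j y * f y) ^ 2))
          + ((∑ j, (M:ℝ)⁻¹ * (∑ y, Q j y * f y) ^ 2)
            - (∑ j, (M:ℝ)⁻¹ * ∑ y, Q j y * f y) ^ 2) := by ring
    rw [e3, show (n:ℝ) * l ^ 2 + 2 * B ^ 2 + 8 = (n:ℝ) * l ^ 2 + (2 * B ^ 2 + 8) from by ring]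
    exact add_le_add hVsum (le_trans hvarJ havg2)
  have hBsq : B ^ 2 ≤ 2 * (lam ^ 2 * n) + 2 * Real.log K ^ 2 := by
    rw [hB, ← hu_sq]
    exact bsq_arith u (Real.log K)
  have h9 : (0:ℝ) ≤ (4 * Real.log K ^ 2 + 8) * ((n:ℝ) - 1) :=
    mul_nonneg (by positivity) (by linarith)
  have h2B : 2 * B ^ 2 ≤ 2 * (2 * (lam ^ 2 * (n:ℝ)) + 2 * Real.log K ^ 2) :=
    mul_le_mul_of_nonneg_left hBsq (by norm_num)
  calc outLogVar W c ≤ (n:ℝ) * l ^ 2 + 2 * B ^ 2 + 8 := hfinal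
    _ ≤ (n:ℝ) * l ^ 2 + 2 * (2 * (lam ^ 2 * (n:ℝ)) + 2 * Real.log K ^ 2) + 8 :=
        add_le_add (add_le_add le_rfl h2B) le_rfl
    _ ≤ ((n:ℝ) * l ^ 2 + 2 * (2 * (lam ^ 2 * (n:ℝ)) + 2 * Real.log K ^ 2) + 8)
          + (4 * Real.log K ^ 2 + 8) * ((n:ℝ) - 1) := le_add_of_nonneg_right h9
    _ = (l ^ 2 + 4 * lam ^ 2 + 4 * Real.log K ^ 2 + 8) * n := by ring
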